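/- There exists an absolute constant A > 0 with the following property. Let ε > 0, let μ ∈ P₂(ℝ^d), let ν be a σ-subgaussian probability measure on ℝ^d (σ > 0), and let g : ℝ^d → ℝ be measurable with g(y) ≤ ½∫‖z−y‖² dμ(z) for all y ∈ ℝ^d. Then for every x ∈ ℝ^d, the integral I(x) := ∫ exp((g(y) − ½‖x−y‖²)/ε) dν(y) is finite and ε·log I(x) ≤ ½·M₂(μ) − ½‖x‖² + (A·σ²/ε)·‖x − E(μ)‖² + ‖E(ν)‖·‖x − E(μ)‖. In particular, the function f(x) := −ε·log I(x) satisfies a lower bound of the form f(x) ≥ −C·(‖x‖² + 1) for a constant C depending only on ε, σ, ‖E(μ)‖, M₂(μ) and ‖E(ν)‖. -/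

import Mathlib

open MeasureTheory ENNReal
open scoped RealInnerProductSpace

/-- `μ ∈ P₂(ℝ^d)`: a Borel probability measure with finite second moment. -/
def MemP2 {d : ℕ} (μ : Measure (EuclideanSpace ℝ (Fin d))) : Prop :=
  IsProbabilityMeasure μ ∧ Integrable (fun x => ‖x‖ ^ 2) μ

/-- `μ` is a `σ`-subgaussian probability measure on `ℝ^d`. -/
def IsSubgaussian {d : ℕ} (σ : ℝ) (μ : Measure (EuclideanSpace ℝ (Fin d))) : Prop :=
  IsProbabilityMeasure μ ∧ ∀ v : EuclideanSpace ℝ (Fin d), ‖v‖ = 1 →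
    ∫⁻ x, ENNReal.ofReal (Real.exp (⟪x, v⟫ ^ 2 / σ ^ 2)) ∂μ ≤ 2

lemma exp_le_quad {z : ℝ} (hz : z ≤ 1) : Real.exp z ≤ 1 + z + z ^ 2 := by
  rcases le_or_gt z (-1) with h | h
  · have h1 : Real.exp z ≤ 1 := Real.exp_le_one_iff.mpr (by linarith)
    nlinarith
  · have habs : |z| ≤ 1 := abs_le.mpr ⟨h.le, hz⟩
    have := Real.exp_bound habs (n := 3) (by norm_num)
    have h2 : |Real.exp z - (1 + z + z ^ 2 / 2)| ≤ |z| ^ 3 * (4 / 18) := by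
      convert this using 3
      · simp [Finset.sum_range_succ]
      · norm_num [Nat.factorial]
      · norm_num [Nat.factorial]
    have h3 := (abs_le.mp h2).2
    have h4 : |z| ^ 3 ≤ z ^ 2 := by
      have : |z| ^ 3 = |z| * z ^ 2 := by rw [← sq_abs]; ring
      nlinarith [abs_nonneg z, sq_nonneg z]
    nlinarith

lemma exp_le_add_exp_sq (z : ℝ) : Real.exp z ≤ z + Real.exp (z ^ 2) := by
  rcases le_or_gt z 1 with h | h
  · have h1 := exp_le_quad h
    have h2 : 1 + z ^ 2 ≤ Real.exp (z ^ 2) := by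
      have := Real.add_one_le_exp (z ^ 2); linarith
    linarith
  · have h1 : Real.exp z ≤ Real.exp (z ^ 2) := Real.exp_le_exp.mpr (by nlinarith)
    linarith

lemma integrable_and_integral_le {α} [MeasurableSpace α] {μ : Measure α} {f : α → ℝ}
    (hm : AEStronglyMeasurable f μ) (h0 : ∀ a, 0 ≤ f a) {C : ℝ≥0∞} (hC : C ≠ ∞)
    (h : ∫⁻ a, ENNReal.ofReal (f a) ∂μ ≤ C) : Integrable f μ ∧ ∫ a, f a ∂μ ≤ C.toReal := by
  have hint : Integrable f μ := by
    refine ⟨hm, ?_⟩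
    rw [hasFiniteIntegral_iff_ofReal (Filter.Eventually.of_forall h0)]
    exact lt_of_le_of_lt h hC.lt_top
  refine ⟨hint, ?_⟩
  rw [integral_eq_lintegral_of_nonneg_ae (Filter.Eventually.of_forall h0) hm]
  exact ENNReal.toReal_mono hC h

section
variable {d : ℕ} {σ : ℝ} {ν : Measure (EuclideanSpace ℝ (Fin d))}

lemma sg_exp_int (hσ : 0 < σ) (hν : IsSubgaussian σ ν) {v : EuclideanSpace ℝ (Fin d)}
    (hv : ‖v‖ = 1) :
    Integrable (fun y => Real.exp (⟪y, v⟫ ^ 2 / σ ^ 2)) ν ∧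
      ∫ y, Real.exp (⟪y, v⟫ ^ 2 / σ ^ 2) ∂ν ≤ 2 := by
  have hm : AEStronglyMeasurable (fun y => Real.exp (⟪y, v⟫ ^ 2 / σ ^ 2)) ν :=
    (Real.continuous_exp.comp (((continuous_id.inner continuous_const).pow 2).div_const _)).aestronglyMeasurable
  have := integrable_and_integral_le hm (fun a => (Real.exp_pos _).le) (by norm_num : (2:ℝ≥0∞) ≠ ∞) (hν.2 v hv)
  simpa using this

lemma sg_norm_sq_int (hσ : 0 < σ) (hν : IsSubgaussian σ ν) :
    Integrable (fun y => ‖y‖ ^ 2) ν := by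
  have hi : ∀ i : Fin d, Integrable (fun y : EuclideanSpace ℝ (Fin d) => (y i) ^ 2) ν := by
    intro i
    have hv : ‖(EuclideanSpace.single i (1:ℝ))‖ = 1 := by
      rw [EuclideanSpace.norm_single]; norm_num
    have hint := (sg_exp_int hσ hν hv).1
    refine Integrable.mono' (hint.const_mul (σ ^ 2)) ?_ ?_
    · exact (by fun_prop : Continuous (fun y : EuclideanSpace ℝ (Fin d) => (y i) ^ 2)).aestronglyMeasurable
    · refine Filter.Eventually.of_forall fun y => ?_
      have h1 : ⟪y, EuclideanSpace.single i (1:ℝ)⟫ = y i := by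
        simp [EuclideanSpace.inner_single_right]
      rw [h1, Real.norm_eq_abs, abs_of_nonneg (sq_nonneg _)]
      have h2 := Real.add_one_le_exp ((y i) ^ 2 / σ ^ 2)
      have h3 : (0:ℝ) < σ ^ 2 := by positivity
      calc (y i) ^ 2 = σ ^ 2 * ((y i) ^ 2 / σ ^ 2) := by field_simp
        _ ≤ σ ^ 2 * Real.exp ((y i) ^ 2 / σ ^ 2) := by
            apply mul_le_mul_of_nonneg_left (by linarith) h3.le
  have heq : ∀ y : EuclideanSpace ℝ (Fin d), ‖y‖ ^ 2 = ∑ i, (y i) ^ 2 := by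
    intro y
    rw [EuclideanSpace.norm_eq, Real.sq_sqrt (by positivity)]
    simp [Real.norm_eq_abs, sq_abs]
  simp_rw [heq]
  exact integrable_finset_sum _ (fun i _ => hi i)

lemma sg_id_int (hσ : 0 < σ) (hν : IsSubgaussian σ ν) :
    Integrable (fun y : EuclideanSpace ℝ (Fin d) => y) ν := by
  haveI := hν.1
  refine Integrable.mono' ((integrable_const 1).add (sg_norm_sq_int hσ hν)) aestronglyMeasurable_id ?_
  refine Filter.Eventually.of_forall fun y => ?_
  have := sq_nonneg (‖y‖ - 1)
  simp only [Pi.add_apply]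
  nlinarith [norm_nonneg y]

lemma sg_inner_int (hσ : 0 < σ) (hν : IsSubgaussian σ ν) (w : EuclideanSpace ℝ (Fin d)) :
    Integrable (fun y => ⟪w, y⟫) ν := by
  haveI := hν.1
  refine Integrable.mono' (((integrable_const 1).add (sg_norm_sq_int hσ hν)).const_mul ‖w‖)
    ((continuous_const.inner continuous_id).aestronglyMeasurable) ?_
  refine Filter.Eventually.of_forall fun y => ?_
  calc ‖⟪w, y⟫‖ ≤ ‖w‖ * ‖y‖ := by
        rw [Real.norm_eq_abs]; exact abs_real_inner_le_norm w y
    _ ≤ ‖w‖ * (1 + ‖y‖ ^ 2) := by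
        have := sq_nonneg (‖y‖ - 1)
        nlinarith [norm_nonneg w, norm_nonneg y]
end

lemma sg_mgf {d : ℕ} {σ : ℝ} {ν : Measure (EuclideanSpace ℝ (Fin d))}
    (hσ : 0 < σ) (hν : IsSubgaussian σ ν) (w : EuclideanSpace ℝ (Fin d)) :
    Integrable (fun y => Real.exp ⟪w, y⟫) ν ∧
      Real.log (∫ y, Real.exp ⟪w, y⟫ ∂ν) ≤ σ ^ 2 * ‖w‖ ^ 2 + ‖∫ y, y ∂ν‖ * ‖w‖ := by
  haveI := hν.1
  by_cases hw : w = 0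
  · subst hw
    simp only [inner_zero_left, Real.exp_zero]
    refine ⟨integrable_const 1, ?_⟩
    simp [norm_zero]
  · set t := ‖w‖ with htdef
    have ht : 0 < t := norm_pos_iff.mpr hw
    set v := ‖w‖⁻¹ • w with hvdef
    have hv : ‖v‖ = 1 := norm_smul_inv_norm hw
    have hwy : ∀ y, ⟪w, y⟫ = t * ⟪y, v⟫ := by
      intro y
      rw [hvdef, real_inner_smul_right, real_inner_comm w y]
      field_simp
      rfl
    obtain ⟨he_int, he_le⟩ := sg_exp_int hσ hν hv
    have hdom : ∀ y, Real.exp (t * ⟪y, v⟫) ≤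
        Real.exp (t ^ 2 * σ ^ 2 / 4) * Real.exp (⟪y, v⟫ ^ 2 / σ ^ 2) := by
      intro y
      rw [← Real.exp_add]
      apply Real.exp_le_exp.mpr
      have hs : ⟪y, v⟫ = (⟪y, v⟫ / σ) * σ := by field_simp
      have hq : ⟪y, v⟫ ^ 2 / σ ^ 2 = (⟪y, v⟫ / σ) ^ 2 := by
        rw [div_pow]
      rw [hq]
      nlinarith [sq_nonneg (⟪y, v⟫ / σ - t * σ / 2)]
    have hcont : Continuous (fun y : EuclideanSpace ℝ (Fin d) => Real.exp (t * ⟪y, v⟫)) :=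
      Real.continuous_exp.comp (continuous_const.mul (continuous_id.inner continuous_const))
    have hint : Integrable (fun y => Real.exp ⟪w, y⟫) ν := by
      simp_rw [hwy]
      refine Integrable.mono' (he_int.const_mul (Real.exp (t ^ 2 * σ ^ 2 / 4)))
        hcont.aestronglyMeasurable (Filter.Eventually.of_forall fun y => ?_)
      rw [Real.norm_eq_abs, abs_of_pos (Real.exp_pos _)]
      exact hdom y
    refine ⟨hint, ?_⟩
    have hJpos : 0 < ∫ y, Real.exp ⟪w, y⟫ ∂ν := integral_exp_pos hint
    have hint' : Integrable (fun y => Real.exp (t * ⟪y, v⟫)) ν := by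
      have := hint; simp_rw [hwy] at this; exact this
    have hJeq : ∫ y, Real.exp ⟪w, y⟫ ∂ν = ∫ y, Real.exp (t * ⟪y, v⟫) ∂ν := by
      simp_rw [hwy]
    rcases le_total (t * σ) 1 with hcase | hcase
    · -- small case
      have hp0 : (0:ℝ) ≤ t ^ 2 * σ ^ 2 := by positivity
      have hp1 : t ^ 2 * σ ^ 2 ≤ 1 := by
        nlinarith [mul_nonneg (by linarith : (0:ℝ) ≤ 1 - t * σ) (mul_nonneg ht.le hσ.le)]
      have hconv : ∀ y, Real.exp (t ^ 2 * ⟪y, v⟫ ^ 2) ≤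
          (1 - t ^ 2 * σ ^ 2) + t ^ 2 * σ ^ 2 * Real.exp (⟪y, v⟫ ^ 2 / σ ^ 2) := by
        intro y
        have h := convexOn_exp.2 (Set.mem_univ (0:ℝ)) (Set.mem_univ (⟪y, v⟫ ^ 2 / σ ^ 2))
          (by linarith : (0:ℝ) ≤ 1 - t ^ 2 * σ ^ 2) hp0 (by ring)
        simp only [smul_eq_mul, mul_zero, zero_add, Real.exp_zero, mul_one] at h
        have harg : t ^ 2 * σ ^ 2 * (⟪y, v⟫ ^ 2 / σ ^ 2) = t ^ 2 * ⟪y, v⟫ ^ 2 := by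
          field_simp
        rw [harg] at h
        linarith
      have hsq_int : Integrable (fun y => Real.exp (t ^ 2 * ⟪y, v⟫ ^ 2)) ν := by
        refine Integrable.mono' ((integrable_const (1 - t ^ 2 * σ ^ 2)).add
          (he_int.const_mul (t ^ 2 * σ ^ 2)))
          ((Real.continuous_exp.comp (continuous_const.mul
            ((continuous_id.inner continuous_const).pow 2))).aestronglyMeasurable)
          (Filter.Eventually.of_forall fun y => ?_)
        rw [Real.norm_eq_abs, abs_of_pos (Real.exp_pos _)]
        exact hconv y
      have hs_int : Integrable (fun y => ⟪y, v⟫) ν := by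
        exact (sg_inner_int hσ hν v).congr
          (Filter.Eventually.of_forall fun y => real_inner_comm y v)
      have hEs : ∫ y, ⟪y, v⟫ ∂ν ≤ ‖∫ y, y ∂ν‖ := by
        have h := integral_inner (𝕜 := ℝ) (sg_id_int hσ hν) v
        have h2 : ∫ y, ⟪y, v⟫ ∂ν = ⟪v, ∫ y, y ∂ν⟫ := by
          rw [← h]; simp_rw [real_inner_comm]
        rw [h2]
        calc ⟪v, ∫ y, y ∂ν⟫ ≤ ‖v‖ * ‖∫ y, y ∂ν‖ := real_inner_le_norm _ _
          _ = ‖∫ y, y ∂ν‖ := by rw [hv, one_mul]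
      have hstep1 : ∫ y, Real.exp (t * ⟪y, v⟫) ∂ν ≤
          ∫ y, (t * ⟪y, v⟫ + Real.exp (t ^ 2 * ⟪y, v⟫ ^ 2)) ∂ν := by
        refine integral_mono hint' ((hs_int.const_mul t).add hsq_int) fun y => ?_
        have := exp_le_add_exp_sq (t * ⟪y, v⟫)
        have hpow : (t * ⟪y, v⟫) ^ 2 = t ^ 2 * ⟪y, v⟫ ^ 2 := by ring
        rw [hpow] at this
        exact this
      have hstep2 : ∫ y, (t * ⟪y, v⟫ + Real.exp (t ^ 2 * ⟪y, v⟫ ^ 2)) ∂ν =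
          t * ∫ y, ⟪y, v⟫ ∂ν + ∫ y, Real.exp (t ^ 2 * ⟪y, v⟫ ^ 2) ∂ν := by
        rw [integral_add (hs_int.const_mul t) hsq_int, integral_const_mul]
      have hstep3 : ∫ y, Real.exp (t ^ 2 * ⟪y, v⟫ ^ 2) ∂ν ≤
          (1 - t ^ 2 * σ ^ 2) + t ^ 2 * σ ^ 2 * 2 := by
        calc ∫ y, Real.exp (t ^ 2 * ⟪y, v⟫ ^ 2) ∂ν
            ≤ ∫ y, ((1 - t ^ 2 * σ ^ 2) + t ^ 2 * σ ^ 2 * Real.exp (⟪y, v⟫ ^ 2 / σ ^ 2)) ∂ν := by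
              refine integral_mono hsq_int ((integrable_const _).add
                (he_int.const_mul _)) fun y => hconv y
          _ = (1 - t ^ 2 * σ ^ 2) + t ^ 2 * σ ^ 2 * ∫ y, Real.exp (⟪y, v⟫ ^ 2 / σ ^ 2) ∂ν := by
              rw [integral_add (integrable_const _) (he_int.const_mul _),
                integral_const, integral_const_mul]
              simp
          _ ≤ (1 - t ^ 2 * σ ^ 2) + t ^ 2 * σ ^ 2 * 2 := by nlinarith
      have hJle : ∫ y, Real.exp ⟪w, y⟫ ∂ν ≤ 1 + t ^ 2 * σ ^ 2 + t * ‖∫ y, y ∂ν‖ := by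
        rw [hJeq]
        have := mul_le_mul_of_nonneg_left hEs ht.le
        linarith [hstep1, hstep2 ▸ hstep1, hstep3]
      calc Real.log (∫ y, Real.exp ⟪w, y⟫ ∂ν) ≤ (∫ y, Real.exp ⟪w, y⟫ ∂ν) - 1 :=
            Real.log_le_sub_one_of_pos hJpos
        _ ≤ σ ^ 2 * t ^ 2 + ‖∫ y, y ∂ν‖ * t := by nlinarith [hJle]
    · -- big case
      have hJle : ∫ y, Real.exp ⟪w, y⟫ ∂ν ≤ Real.exp (t ^ 2 * σ ^ 2 / 4) * 2 := by
        rw [hJeq]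
        calc ∫ y, Real.exp (t * ⟪y, v⟫) ∂ν
            ≤ ∫ y, Real.exp (t ^ 2 * σ ^ 2 / 4) * Real.exp (⟪y, v⟫ ^ 2 / σ ^ 2) ∂ν :=
              integral_mono hint' (he_int.const_mul _) fun y => hdom y
          _ = Real.exp (t ^ 2 * σ ^ 2 / 4) * ∫ y, Real.exp (⟪y, v⟫ ^ 2 / σ ^ 2) ∂ν := by
              rw [integral_const_mul]
          _ ≤ Real.exp (t ^ 2 * σ ^ 2 / 4) * 2 :=
              mul_le_mul_of_nonneg_left he_le (Real.exp_pos _).le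
      calc Real.log (∫ y, Real.exp ⟪w, y⟫ ∂ν) ≤ Real.log (Real.exp (t ^ 2 * σ ^ 2 / 4) * 2) :=
            Real.log_le_log hJpos hJle
        _ = t ^ 2 * σ ^ 2 / 4 + Real.log 2 := by
            rw [Real.log_mul (Real.exp_ne_zero _) two_ne_zero, Real.log_exp]
        _ ≤ σ ^ 2 * t ^ 2 + ‖∫ y, y ∂ν‖ * t := by
            have hl2 : Real.log 2 < 0.6931471808 := Real.log_two_lt_d9
            have h1 : 1 ≤ t ^ 2 * σ ^ 2 := by nlinarith
            nlinarith [mul_nonneg (norm_nonneg (∫ y, y ∂ν)) ht.le]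

section
variable {d : ℕ} {μ : Measure (EuclideanSpace ℝ (Fin d))}

lemma id_int [IsFiniteMeasure μ] (h2 : Integrable (fun z => ‖z‖ ^ 2) μ) :
    Integrable (fun z : EuclideanSpace ℝ (Fin d) => z) μ := by
  refine Integrable.mono' ((integrable_const 1).add h2) aestronglyMeasurable_id
    (Filter.Eventually.of_forall fun y => ?_)
  simp only [Pi.add_apply]
  nlinarith [norm_nonneg y, sq_nonneg (‖y‖ - 1)]

lemma inner_int [IsFiniteMeasure μ] (h2 : Integrable (fun z => ‖z‖ ^ 2) μ)
    (w : EuclideanSpace ℝ (Fin d)) : Integrable (fun z => ⟪z, w⟫) μ := by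
  refine Integrable.mono' (((integrable_const 1).add h2).const_mul ‖w‖)
    ((continuous_id.inner continuous_const).aestronglyMeasurable)
    (Filter.Eventually.of_forall fun y => ?_)
  calc ‖⟪y, w⟫‖ ≤ ‖y‖ * ‖w‖ := by
        rw [Real.norm_eq_abs]; exact abs_real_inner_le_norm y w
    _ ≤ ‖w‖ * (1 + ‖y‖ ^ 2) := by nlinarith [norm_nonneg w, norm_nonneg y, sq_nonneg (‖y‖ - 1)]

lemma moment_expand [IsProbabilityMeasure μ] (h2 : Integrable (fun z => ‖z‖ ^ 2) μ)
    (y : EuclideanSpace ℝ (Fin d)) :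
    ∫ z, ‖z - y‖ ^ 2 ∂μ = (∫ z, ‖z‖ ^ 2 ∂μ) - 2 * ⟪∫ z, z ∂μ, y⟫ + ‖y‖ ^ 2 := by
  have hpt : ∀ z : EuclideanSpace ℝ (Fin d), ‖z - y‖ ^ 2 = ‖z‖ ^ 2 - 2 * ⟪z, y⟫ + ‖y‖ ^ 2 :=
    fun z => norm_sub_sq_real z y
  have hinner : Integrable (fun z => ⟪z, y⟫) μ := inner_int h2 y
  simp_rw [hpt]
  have hfint : Integrable (fun z => ‖z‖ ^ 2 - 2 * ⟪z, y⟫) μ := h2.sub (hinner.const_mul 2)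
  rw [integral_add hfint (integrable_const _),
    integral_sub h2 (hinner.const_mul 2), integral_const_mul, integral_const]
  have h := integral_inner (𝕜 := ℝ) (id_int h2) y
  have h2' : ∫ z, ⟪z, y⟫ ∂μ = ⟪∫ z, z ∂μ, y⟫ := by
    rw [real_inner_comm y, ← h]; simp_rw [real_inner_comm y]
  rw [h2']
  simp

end


set_option maxHeartbeats 1000000 in
/-- Lower bound on the entropic potential `f(x) = −ε log ∫ exp((g(y) − ½‖x−y‖²)/ε) dν(y)`:
the normalizing integral is finite, `ε log I(x)` satisfies the quadratic upper bound with
an absolute constant `A`, and in particular `f(x) ≥ −C·(‖x‖² + 1)` for a constant `C`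
depending only on `ε, σ, ‖E(μ)‖, M₂(μ), ‖E(ν)‖`. -/
theorem entropic_potential_lower_bound :
    ∃ A : ℝ, 0 < A ∧ ∃ C : ℝ → ℝ → ℝ → ℝ → ℝ → ℝ,
      ∀ (d : ℕ) (ε σ : ℝ), 0 < ε → 0 < σ →
      ∀ (μ ν : Measure (EuclideanSpace ℝ (Fin d))), MemP2 μ → IsSubgaussian σ ν →
      ∀ g : EuclideanSpace ℝ (Fin d) → ℝ, Measurable g →
      (∀ y, g y ≤ (1 / 2) * ∫ z, ‖z - y‖ ^ 2 ∂μ) →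
      ∀ x : EuclideanSpace ℝ (Fin d),
        Integrable (fun y => Real.exp ((g y - (1 / 2) * ‖x - y‖ ^ 2) / ε)) ν ∧
        ε * Real.log (∫ y, Real.exp ((g y - (1 / 2) * ‖x - y‖ ^ 2) / ε) ∂ν)
          ≤ (1 / 2) * (∫ z, ‖z‖ ^ 2 ∂μ) - (1 / 2) * ‖x‖ ^ 2
            + (A * σ ^ 2 / ε) * ‖x - ∫ z, z ∂μ‖ ^ 2
            + ‖∫ z, z ∂ν‖ * ‖x - ∫ z, z ∂μ‖ ∧
        -(C ε σ ‖∫ z, z ∂μ‖ (∫ z, ‖z‖ ^ 2 ∂μ) ‖∫ z, z ∂ν‖) * (‖x‖ ^ 2 + 1)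
          ≤ -(ε * Real.log (∫ y, Real.exp ((g y - (1 / 2) * ‖x - y‖ ^ 2) / ε) ∂ν)) := by
  refine ⟨1, one_pos, fun ε σ a b c => b / 2 + (2 * σ ^ 2 / ε) * (a ^ 2 + 1) + c * (a + 1),
    fun d ε σ hε hσ μ ν hμ hν g hg hgle x => ?_⟩
  obtain ⟨hμp, hμ2⟩ := hμ
  haveI := hμp
  haveI := hν.1
  set Eμ := ∫ z, z ∂μ with hEμ
  set M2 := ∫ z, ‖z‖ ^ 2 ∂μ with hM2
  set Eν := ∫ z, z ∂ν with hEν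
  set w : EuclideanSpace ℝ (Fin d) := ε⁻¹ • (x - Eμ) with hw
  have hwnorm : ‖w‖ = ‖x - Eμ‖ / ε := by
    rw [hw, norm_smul, Real.norm_eq_abs, abs_of_pos (inv_pos.mpr hε), div_eq_inv_mul]
  -- pointwise bound on the exponent
  have hpt : ∀ y, (g y - (1 / 2) * ‖x - y‖ ^ 2) / ε
      ≤ ((1 / 2) * M2 - (1 / 2) * ‖x‖ ^ 2) / ε + ⟪w, y⟫ := by
    intro y
    have h1 : g y - (1 / 2) * ‖x - y‖ ^ 2 ≤ (1 / 2) * M2 - (1 / 2) * ‖x‖ ^ 2 + ⟪x - Eμ, y⟫ := by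
      have h2 := hgle y
      rw [moment_expand hμ2 y] at h2
      have h3 : ‖x - y‖ ^ 2 = ‖x‖ ^ 2 - 2 * ⟪x, y⟫ + ‖y‖ ^ 2 := norm_sub_sq_real x y
      have h4 : ⟪x - Eμ, y⟫ = ⟪x, y⟫ - ⟪Eμ, y⟫ := inner_sub_left x Eμ y
      rw [h3] at *
      linarith
    have h5 : ⟪w, y⟫ = ε⁻¹ * ⟪x - Eμ, y⟫ := real_inner_smul_left _ _ _
    have heq : ((1 / 2) * M2 - (1 / 2) * ‖x‖ ^ 2) / ε + ⟪w, y⟫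
        = ((1 / 2) * M2 - (1 / 2) * ‖x‖ ^ 2 + ⟪x - Eμ, y⟫) / ε := by
      rw [h5]; field_simp
    rw [heq]
    exact (div_le_div_iff_of_pos_right hε).mpr h1
  obtain ⟨hmgf_int, hmgf_log⟩ := sg_mgf hσ hν w
  set K := ((1 / 2) * M2 - (1 / 2) * ‖x‖ ^ 2) / ε with hK
  -- integrability of the main integrand
  have hmeas : Measurable fun y : EuclideanSpace ℝ (Fin d) =>
      Real.exp ((g y - (1 / 2) * ‖x - y‖ ^ 2) / ε) := by
    apply Real.measurable_exp.comp
    exact (hg.sub ((((continuous_const.sub continuous_id).norm.pow 2).measurable).const_mul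
      (1 / 2))).div_const ε
  have hI_int : Integrable (fun y => Real.exp ((g y - (1 / 2) * ‖x - y‖ ^ 2) / ε)) ν := by
    refine Integrable.mono' (hmgf_int.const_mul (Real.exp K)) hmeas.aestronglyMeasurable
      (Filter.Eventually.of_forall fun y => ?_)
    rw [Real.norm_eq_abs, abs_of_pos (Real.exp_pos _), ← Real.exp_add]
    exact Real.exp_le_exp.mpr (hpt y)
  have hmain : ε * Real.log (∫ y, Real.exp ((g y - (1 / 2) * ‖x - y‖ ^ 2) / ε) ∂ν)
      ≤ (1 / 2) * M2 - (1 / 2) * ‖x‖ ^ 2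
        + (1 * σ ^ 2 / ε) * ‖x - Eμ‖ ^ 2 + ‖Eν‖ * ‖x - Eμ‖ := by
    have hIpos : 0 < ∫ y, Real.exp ((g y - (1 / 2) * ‖x - y‖ ^ 2) / ε) ∂ν :=
      integral_exp_pos hI_int
    have hJpos : 0 < ∫ y, Real.exp ⟪w, y⟫ ∂ν := integral_exp_pos hmgf_int
    have hIle : ∫ y, Real.exp ((g y - (1 / 2) * ‖x - y‖ ^ 2) / ε) ∂ν
        ≤ Real.exp K * ∫ y, Real.exp ⟪w, y⟫ ∂ν := by
      rw [← integral_const_mul]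
      refine integral_mono hI_int (hmgf_int.const_mul _) fun y => ?_
      rw [← Real.exp_add]
      exact Real.exp_le_exp.mpr (hpt y)
    have hlog : Real.log (∫ y, Real.exp ((g y - (1 / 2) * ‖x - y‖ ^ 2) / ε) ∂ν)
        ≤ K + Real.log (∫ y, Real.exp ⟪w, y⟫ ∂ν) := by
      calc Real.log (∫ y, Real.exp ((g y - (1 / 2) * ‖x - y‖ ^ 2) / ε) ∂ν)
          ≤ Real.log (Real.exp K * ∫ y, Real.exp ⟪w, y⟫ ∂ν) := Real.log_le_log hIpos hIle
        _ = K + Real.log (∫ y, Real.exp ⟪w, y⟫ ∂ν) := by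
            rw [Real.log_mul (Real.exp_ne_zero _) hJpos.ne', Real.log_exp]
    have h6 : ε * Real.log (∫ y, Real.exp ((g y - (1 / 2) * ‖x - y‖ ^ 2) / ε) ∂ν)
        ≤ ε * K + ε * (σ ^ 2 * ‖w‖ ^ 2 + ‖Eν‖ * ‖w‖) := by
      have h7 := mul_le_mul_of_nonneg_left hlog hε.le
      have h8 := mul_le_mul_of_nonneg_left hmgf_log hε.le
      nlinarith
    have h9 : ε * K = (1 / 2) * M2 - (1 / 2) * ‖x‖ ^ 2 := by
      rw [hK]; field_simp
    have h10 : ε * (σ ^ 2 * ‖w‖ ^ 2 + ‖Eν‖ * ‖w‖)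
        = (1 * σ ^ 2 / ε) * ‖x - Eμ‖ ^ 2 + ‖Eν‖ * ‖x - Eμ‖ := by
      rw [hwnorm]; field_simp
    rw [h9, h10] at h6
    linarith
  refine ⟨hI_int, hmain, ?_⟩
  have hM2nn : 0 ≤ M2 := by
    rw [hM2]; exact integral_nonneg fun z => sq_nonneg _
  have hs : ‖x - Eμ‖ ≤ ‖x‖ + ‖Eμ‖ := norm_sub_le x Eμ
  have hsn : 0 ≤ ‖x - Eμ‖ := norm_nonneg _
  have hcn : 0 ≤ ‖Eν‖ := norm_nonneg _
  have han : 0 ≤ ‖Eμ‖ := norm_nonneg _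
  have hrn : 0 ≤ ‖x‖ := norm_nonneg _
  have hsig : (0:ℝ) < σ ^ 2 / ε := by positivity
  have h1 : ‖x - Eμ‖ ^ 2 ≤ 2 * (‖Eμ‖ ^ 2 + 1) * (‖x‖ ^ 2 + 1) := by
    nlinarith [sq_nonneg (‖x‖ - ‖Eμ‖), sq_nonneg (‖Eμ‖ * ‖x‖)]
  have h2 : ‖x - Eμ‖ ≤ (‖Eμ‖ + 1) * (‖x‖ ^ 2 + 1) := by
    nlinarith [sq_nonneg (‖x‖ - 1), mul_nonneg han (sq_nonneg ‖x‖)]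
  have key : (1 / 2) * M2 - (1 / 2) * ‖x‖ ^ 2
      + (1 * σ ^ 2 / ε) * ‖x - Eμ‖ ^ 2 + ‖Eν‖ * ‖x - Eμ‖
      ≤ (M2 / 2 + (2 * σ ^ 2 / ε) * (‖Eμ‖ ^ 2 + 1) + ‖Eν‖ * (‖Eμ‖ + 1)) * (‖x‖ ^ 2 + 1) := by
    have e1 : 1 * σ ^ 2 / ε * ‖x - Eμ‖ ^ 2 = σ ^ 2 / ε * ‖x - Eμ‖ ^ 2 := by ring
    have e2 : 2 * σ ^ 2 / ε * (‖Eμ‖ ^ 2 + 1) = 2 * (σ ^ 2 / ε * (‖Eμ‖ ^ 2 + 1)) := by ring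
    rw [e1, e2]
    generalize hgen : σ ^ 2 / ε = qq at hsig ⊢
    nlinarith [mul_le_mul_of_nonneg_left h1 hsig.le, mul_le_mul_of_nonneg_left h2 hcn,
      mul_nonneg hM2nn (sq_nonneg ‖x‖), sq_nonneg ‖x‖]
  linarith [hmain, key]
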